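/- arXiv:1312.2128 — 3 statements merged into one kernel-verified Lean document; each statement's English description precedes it below -/
import Mathlib

section
/- Let p > 0 and d ≥ 1. There is a constant C, depending only on p and d, such that for all probability measures μ, ν on ℝ^d, D_p(μ,ν) ≤ C Σ_{n≥0} 2^{pn} Σ_{ℓ≥0} 2^{−pℓ} Σ_{F∈P_ℓ} |μ(2^n F ∩ B_n) − ν(2^n F ∩ B_n)|, where 2^n F := {2^n x : x ∈ F}. -/
open MeasureTheory ProbabilityTheory Real Set ENNReal NNReal

noncomputable section

/-- `T_p(μ,ν)`: infimum over couplings of `∫ |x-y|^p`. -/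
def Tcost (d : ℕ) (p : ℝ) (μ ν : Measure (EuclideanSpace ℝ (Fin d))) : ℝ :=
  sInf { r : ℝ | ∃ ξ : Measure (EuclideanSpace ℝ (Fin d) × EuclideanSpace ℝ (Fin d)),
    ξ.fst = μ ∧ ξ.snd = ν ∧ r = ∫ z, ‖z.1 - z.2‖ ^ p ∂ξ }

/-- empirical measure of the points `X 0, ..., X (N-1)`. -/
def empMeas (d N : ℕ) (X : ℕ → EuclideanSpace ℝ (Fin d)) : Measure (EuclideanSpace ℝ (Fin d)) :=
  ((N : ℝ≥0∞))⁻¹ • ∑ k ∈ Finset.range N, Measure.dirac (X k)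

/-- the cube of the partition `P_ℓ` of `(-1,1]^d` indexed by `k`. -/
def cube (d ℓ : ℕ) (k : Fin d → Fin (2 ^ ℓ)) : Set (EuclideanSpace ℝ (Fin d)) :=
  {x | ∀ i, x i ∈ Set.Ioc (-1 + (k i : ℝ) * 2 ^ (1 - (ℓ : ℤ)))
    (-1 + ((k i : ℝ) + 1) * 2 ^ (1 - (ℓ : ℤ)))}

/-- `D_p` for measures on `(-1,1]^d`. -/
def DpCpt (d : ℕ) (p : ℝ) (μ ν : Measure (EuclideanSpace ℝ (Fin d))) : ℝ :=
  (2 ^ p - 1) / 2 * ∑' ℓ : ℕ, 2 ^ (-(p * ((ℓ : ℝ) + 1))) *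
    ∑ k : Fin d → Fin (2 ^ (ℓ + 1)),
      |(μ (cube d (ℓ + 1) k)).toReal - (ν (cube d (ℓ + 1) k)).toReal|

/-- the annuli `B_n`. -/
def Bset (d n : ℕ) : Set (EuclideanSpace ℝ (Fin d)) :=
  if n = 0 then {x | ∀ i, x i ∈ Set.Ioc (-1 : ℝ) 1}
  else {x | ∀ i, x i ∈ Set.Ioc (-(2 : ℝ) ^ n) ((2 : ℝ) ^ n)} \
    {x | ∀ i, x i ∈ Set.Ioc (-(2 : ℝ) ^ (n - 1)) ((2 : ℝ) ^ (n - 1))}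

/-- `R_{B_n} μ`: image of `μ|_{B_n}/μ(B_n)` by `x ↦ x/2^n`. -/
def Rres (d n : ℕ) (μ : Measure (EuclideanSpace ℝ (Fin d))) :
    Measure (EuclideanSpace ℝ (Fin d)) :=
  Measure.map (fun x => ((2 : ℝ) ^ n)⁻¹ • x) ((μ (Bset d n))⁻¹ • μ.restrict (Bset d n))

/-- `D_p` for measures on `ℝ^d`. -/
def Dp (d : ℕ) (p : ℝ) (μ ν : Measure (EuclideanSpace ℝ (Fin d))) : ℝ :=
  ∑' n : ℕ, 2 ^ (p * n) *
    (|(μ (Bset d n)).toReal - (ν (Bset d n)).toReal| +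
      min (μ (Bset d n)).toReal (ν (Bset d n)).toReal *
        DpCpt d p (Rres d n μ) (Rres d n ν))

/-- `f(x) = (1+x)log(1+x) - x`. -/
def fBen (x : ℝ) : ℝ := (1 + x) * Real.log (1 + x) - x

/-- `g(x) = (x log x - x + 1) 1_{x ≥ 1}`. -/
def gBen (x : ℝ) : ℝ := if 1 ≤ x then x * Real.log x - x + 1 else 0

-- BEGIN AUX
lemma FG_meas_forall_Ioc {d : ℕ} (a b : Fin d → ℝ) :
    MeasurableSet {x : EuclideanSpace ℝ (Fin d) | ∀ i, x i ∈ Set.Ioc (a i) (b i)} := by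
  have : {x : EuclideanSpace ℝ (Fin d) | ∀ i, x i ∈ Set.Ioc (a i) (b i)}
      = ⋂ i, (fun x : EuclideanSpace ℝ (Fin d) => x i) ⁻¹' (Set.Ioc (a i) (b i)) := by
    ext x; simp
  rw [this]
  exact MeasurableSet.iInter fun i => (EuclideanSpace.proj (𝕜 := ℝ) i).continuous.measurable measurableSet_Ioc

lemma FG_meas_cube (d ℓ : ℕ) (k : Fin d → Fin (2 ^ ℓ)) : MeasurableSet (cube d ℓ k) :=
  FG_meas_forall_Ioc _ _

lemma FG_meas_Bset (d n : ℕ) : MeasurableSet (Bset d n) := by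
  unfold Bset
  split
  · exact FG_meas_forall_Ioc (fun _ => (-1:ℝ)) (fun _ => 1)
  · exact (FG_meas_forall_Ioc (fun _ => -(2:ℝ)^n) (fun _ => (2:ℝ)^n)).diff
      (FG_meas_forall_Ioc (fun _ => -(2:ℝ)^(n-1)) (fun _ => (2:ℝ)^(n-1)))

lemma FG_image_smul {d : ℕ} (c : ℝ) (hc : c ≠ 0) (S : Set (EuclideanSpace ℝ (Fin d))) :
    (fun x : EuclideanSpace ℝ (Fin d) => c • x) '' S
      = (fun x : EuclideanSpace ℝ (Fin d) => c⁻¹ • x) ⁻¹' S := by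
  ext x
  constructor
  · rintro ⟨y, hy, rfl⟩
    simpa [smul_smul, inv_mul_cancel₀ hc] using hy
  · intro h
    exact ⟨c⁻¹ • x, h, by simp [smul_smul, mul_inv_cancel₀ hc]⟩

lemma FG_Rres_apply (d n ℓ : ℕ) (μ : Measure (EuclideanSpace ℝ (Fin d)))
    (k : Fin d → Fin (2 ^ ℓ)) :
    Rres d n μ (cube d ℓ k)
      = (μ (Bset d n))⁻¹ *
        μ ((fun x : EuclideanSpace ℝ (Fin d) => (2 : ℝ) ^ n • x) '' cube d ℓ k ∩ Bset d n) := by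
  have h2 : ((2:ℝ)^n) ≠ 0 := by positivity
  have hm : Measurable (fun x : EuclideanSpace ℝ (Fin d) => ((2:ℝ)^n)⁻¹ • x) :=
    measurable_const_smul _
  rw [Rres, Measure.map_apply hm (FG_meas_cube d ℓ k),
    Measure.smul_apply,
    Measure.restrict_apply ((FG_meas_cube d ℓ k).preimage hm),
    ← FG_image_smul _ h2, smul_eq_mul]

lemma FG_cube_disjoint {d ℓ : ℕ} {k k' : Fin d → Fin (2^ℓ)} (hkk : k ≠ k') :
    Disjoint (cube d ℓ k) (cube d ℓ k') := by
  obtain ⟨i, hi⟩ := Function.ne_iff.mp hkk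
  rw [Set.disjoint_left]
  intro x hx hx'
  have hpos : (0:ℝ) < (2:ℝ)^(1-(ℓ:ℤ)) := by positivity
  have h1 := hx i
  have h2 := hx' i
  have key : ∀ (a b : ℕ), a < b → x i ≤ -1 + ((a:ℝ)+1) * 2^(1-(ℓ:ℤ)) →
      -1 + (b:ℝ) * 2^(1-(ℓ:ℤ)) < x i → False := by
    intro a b hab hle hlt
    have hc : ((a:ℝ)+1) ≤ (b:ℝ) := by exact_mod_cast hab
    nlinarith
  have hv : (k i).val ≠ (k' i).val := fun h => hi (Fin.val_injective h)
  rcases hv.lt_or_gt with hlt | hlt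
  · exact key _ _ hlt h1.2 h2.1
  · exact key _ _ hlt h2.2 h1.1

lemma FG_cube_subset (d ℓ : ℕ) (k : Fin d → Fin (2^ℓ)) : cube d ℓ k ⊆ Bset d 0 := by
  intro x hx
  have hpos : (0:ℝ) < (2:ℝ) ^ (1 - (ℓ:ℤ)) := by positivity
  have hprod : (2:ℝ)^ℓ * (2:ℝ)^(1-(ℓ:ℤ)) = 2 := by
    rw [← zpow_natCast (2:ℝ) ℓ, ← zpow_add₀ (two_ne_zero)]
    norm_num
  simp only [Bset, if_pos rfl, mem_setOf_eq]
  intro i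
  have h := hx i
  have hk : ((k i : ℕ) : ℝ) + 1 ≤ (2:ℝ)^ℓ := by
    have := (k i).isLt
    have : ((k i : ℕ) + 1 : ℕ) ≤ 2^ℓ := this
    exact_mod_cast this
  have hk0 : (0:ℝ) ≤ ((k i : ℕ) : ℝ) := Nat.cast_nonneg _
  constructor
  · nlinarith [h.1]
  · nlinarith [h.2]

lemma FG_bigcube_subset_iUnion (d ℓ : ℕ) :
    Bset d 0 ⊆ ⋃ k : Fin d → Fin (2^ℓ), cube d ℓ k := by
  intro x hx
  have hpos : (0:ℝ) < (2:ℝ) ^ (1 - (ℓ:ℤ)) := by positivity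
  have hprod : (2:ℝ)^ℓ * (2:ℝ)^(1-(ℓ:ℤ)) = 2 := by
    rw [← zpow_natCast (2:ℝ) ℓ, ← zpow_add₀ (two_ne_zero)]
    norm_num
  have hx' : ∀ i, x i ∈ Set.Ioc (-1:ℝ) 1 := by
    simpa [Bset] using hx
  have key : ∀ i, ∃ j : Fin (2^ℓ), x i ∈ Set.Ioc (-1 + (j:ℝ) * 2^(1-(ℓ:ℤ)))
      (-1 + ((j:ℝ)+1) * 2^(1-(ℓ:ℤ))) := by
    intro i
    obtain ⟨hxl, hxu⟩ := hx' i
    set z : ℝ := (x i + 1) / (2:ℝ)^(1-(ℓ:ℤ)) with hzdef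
    have hz0 : 0 < z := div_pos (by linarith) hpos
    have hzle : z ≤ ((2^ℓ : ℕ) : ℝ) := by
      rw [div_le_iff₀ hpos]
      push_cast
      nlinarith
    have hc1 : 1 ≤ ⌈z⌉₊ := Nat.one_le_ceil_iff.mpr hz0
    have hcle : ⌈z⌉₊ ≤ 2^ℓ := Nat.ceil_le.mpr hzle
    have hlt : ⌈z⌉₊ - 1 < 2^ℓ := by
      have := Nat.two_pow_pos ℓ
      omega
    have hcast : (((⌈z⌉₊ - 1 : ℕ)) : ℝ) = (⌈z⌉₊ : ℝ) - 1 := by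
      push_cast [Nat.cast_sub hc1]; ring
    have e1 : z * (2:ℝ)^(1-(ℓ:ℤ)) = x i + 1 := div_mul_cancel₀ _ hpos.ne'
    refine ⟨⟨⌈z⌉₊ - 1, hlt⟩, ?_, ?_⟩
    · have l1 : ((⌈z⌉₊:ℝ) - 1) * (2:ℝ)^(1-(ℓ:ℤ)) < z * (2:ℝ)^(1-(ℓ:ℤ)) := by
        apply mul_lt_mul_of_pos_right _ hpos
        have := Nat.ceil_lt_add_one hz0.le
        linarith
      rw [show ((⟨⌈z⌉₊ - 1, hlt⟩ : Fin (2^ℓ)) : ℝ) = (⌈z⌉₊ : ℝ) - 1 from hcast]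
      linarith
    · have l2 : z * (2:ℝ)^(1-(ℓ:ℤ)) ≤ (⌈z⌉₊:ℝ) * (2:ℝ)^(1-(ℓ:ℤ)) :=
        mul_le_mul_of_nonneg_right (Nat.le_ceil z) hpos.le
      rw [show ((⟨⌈z⌉₊ - 1, hlt⟩ : Fin (2^ℓ)) : ℝ) = (⌈z⌉₊ : ℝ) - 1 from hcast]
      nlinarith
  choose k hk using key
  exact Set.mem_iUnion.mpr ⟨k, hk⟩
-- END
lemma FG_iUnion_cube (d ℓ : ℕ) : ⋃ k : Fin d → Fin (2^ℓ), cube d ℓ k = Bset d 0 :=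
  subset_antisymm (Set.iUnion_subset (FG_cube_subset d ℓ)) (FG_bigcube_subset_iUnion d ℓ)

lemma FG_Bset_subset (d n : ℕ) :
    Bset d n ⊆ (fun x : EuclideanSpace ℝ (Fin d) => (2:ℝ)^n • x) '' Bset d 0 := by
  have hp : (0:ℝ) < (2:ℝ)^n := by positivity
  rw [FG_image_smul _ hp.ne']
  intro x hx
  have hx' : ∀ i, x i ∈ Set.Ioc (-(2:ℝ)^n) ((2:ℝ)^n) := by
    rcases Nat.eq_zero_or_pos n with h0 | h0
    · subst h0; simpa [Bset] using hx
    · rw [Bset, if_neg h0.ne'] at hx; exact hx.1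
  have : ∀ i, (((2:ℝ)^n)⁻¹ • x) i ∈ Set.Ioc (-1:ℝ) 1 := by
    intro i
    have h := hx' i
    have hxi : (((2:ℝ)^n)⁻¹ • x) i = ((2:ℝ)^n)⁻¹ * x i := rfl
    rw [hxi]
    constructor
    · nlinarith [h.1, inv_mul_cancel₀ hp.ne', inv_pos.mpr hp]
    · nlinarith [h.2, inv_mul_cancel₀ hp.ne', inv_pos.mpr hp]
  simpa [Bset, Set.mem_preimage] using this

lemma FG_iUnion_image_inter (d n ℓ : ℕ) :
    (⋃ k : Fin d → Fin (2^ℓ),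
      ((fun x : EuclideanSpace ℝ (Fin d) => (2:ℝ)^n • x) '' cube d ℓ k ∩ Bset d n))
      = Bset d n := by
  rw [← Set.iUnion_inter, ← Set.image_iUnion, FG_iUnion_cube]
  exact Set.inter_eq_self_of_subset_right (FG_Bset_subset d n)

lemma FG_sum_measure (d n ℓ : ℕ) (μ : Measure (EuclideanSpace ℝ (Fin d))) :
    ∑ k : Fin d → Fin (2^ℓ),
      μ ((fun x : EuclideanSpace ℝ (Fin d) => (2:ℝ)^n • x) '' cube d ℓ k ∩ Bset d n)
      = μ (Bset d n) := by
  have hp : ((2:ℝ)^n) ≠ 0 := by positivity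
  have hdisj : Pairwise (Function.onFun Disjoint
      (fun k : Fin d → Fin (2^ℓ) =>
        (fun x : EuclideanSpace ℝ (Fin d) => (2:ℝ)^n • x) '' cube d ℓ k ∩ Bset d n)) := by
    intro k k' hkk
    exact Disjoint.mono Set.inter_subset_left Set.inter_subset_left
      (Set.disjoint_image_of_injective (smul_right_injective _ hp) (FG_cube_disjoint hkk))
  have hmeas : ∀ k : Fin d → Fin (2^ℓ), MeasurableSet
      ((fun x : EuclideanSpace ℝ (Fin d) => (2:ℝ)^n • x) '' cube d ℓ k ∩ Bset d n) := by
    intro k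
    rw [FG_image_smul _ hp]
    exact ((FG_meas_cube d ℓ k).preimage (measurable_const_smul _)).inter (FG_meas_Bset d n)
  conv_rhs => rw [← FG_iUnion_image_inter d n ℓ]
  rw [measure_iUnion hdisj hmeas, tsum_fintype]

lemma FG_sum_toReal (d n ℓ : ℕ) (μ : Measure (EuclideanSpace ℝ (Fin d)))
    [IsProbabilityMeasure μ] :
    ∑ k : Fin d → Fin (2^ℓ),
      (μ ((fun x : EuclideanSpace ℝ (Fin d) => (2:ℝ)^n • x) '' cube d ℓ k ∩ Bset d n)).toReal
      = (μ (Bset d n)).toReal := by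
  rw [← ENNReal.toReal_sum (fun _ _ => measure_ne_top μ _), FG_sum_measure]

lemma FG_Rres_toReal (d n ℓ : ℕ) (μ : Measure (EuclideanSpace ℝ (Fin d)))
    (k : Fin d → Fin (2 ^ ℓ)) :
    (Rres d n μ (cube d ℓ k)).toReal
      = (μ (Bset d n)).toReal⁻¹ *
        (μ ((fun x : EuclideanSpace ℝ (Fin d) => (2 : ℝ) ^ n • x) '' cube d ℓ k
            ∩ Bset d n)).toReal := by
  rw [FG_Rres_apply, ENNReal.toReal_mul, ENNReal.toReal_inv]

-- level 0 cube
lemma FG_cube_zero (d : ℕ) (k : Fin d → Fin (2^0)) : cube d 0 k = Bset d 0 := by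
  have hk : ∀ i, ((k i : ℕ) : ℝ) = 0 := by
    intro i
    have : (k i : ℕ) = 0 := by omega
    simp [this]
  ext x
  simp only [cube, Bset, if_pos rfl, mem_setOf_eq]
  refine forall_congr' fun i => ?_
  rw [hk i]
  norm_num

lemma FG_S0 (d n : ℕ) (μ ν : Measure (EuclideanSpace ℝ (Fin d))) :
    ∑ k : Fin d → Fin (2^0),
      |(μ ((fun x : EuclideanSpace ℝ (Fin d) => (2:ℝ)^n • x) '' cube d 0 k ∩ Bset d n)).toReal
        - (ν ((fun x : EuclideanSpace ℝ (Fin d) => (2:ℝ)^n • x) '' cube d 0 k ∩ Bset d n)).toReal|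
      = |(μ (Bset d n)).toReal - (ν (Bset d n)).toReal| := by
  have himg : ∀ k : Fin d → Fin (2^0),
      (fun x : EuclideanSpace ℝ (Fin d) => (2:ℝ)^n • x) '' cube d 0 k ∩ Bset d n = Bset d n := by
    intro k
    rw [FG_cube_zero]
    exact Set.inter_eq_self_of_subset_right (FG_Bset_subset d n)
  simp only [himg]
  rw [Finset.sum_const, Finset.card_univ]
  have hcard : Fintype.card (Fin d → Fin (2^0)) = 1 := by simp
  rw [hcard, one_smul]
lemma FG_key_aux {ι : Type*} [Fintype ι] (a b : ι → ℝ) (A B : ℝ) (hAB : A ≤ B)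
    (ha : ∀ i, 0 ≤ a i) (hb : ∀ i, 0 ≤ b i)
    (hA : ∑ i, a i = A) (hB : ∑ i, b i = B) :
    min A B * (∑ i, |A⁻¹ * a i - B⁻¹ * b i|) ≤ (∑ i, |a i - b i|) + |A - B| ∧
    (∑ i, |a i - b i|) ≤ min A B * (∑ i, |A⁻¹ * a i - B⁻¹ * b i|) + |A - B| := by
  have hA0 : 0 ≤ A := hA ▸ Finset.sum_nonneg fun i _ => ha i
  have hB0 : 0 ≤ B := hB ▸ Finset.sum_nonneg fun i _ => hb i
  have hmin : min A B = A := min_eq_left hAB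
  have habs : |A - B| = B - A := by
    rw [abs_sub_comm]; exact abs_of_nonneg (by linarith)
  rcases eq_or_lt_of_le hA0 with h0 | h0
  · have ha0 : ∀ i, a i = 0 := by
      intro i
      have hz := (Finset.sum_eq_zero_iff_of_nonneg (fun i _ => ha i)).mp (by rw [hA, ← h0])
      exact hz i (Finset.mem_univ i)
    have hsb : (∑ i, |a i - b i|) = B := by
      rw [← hB]
      exact Finset.sum_congr rfl fun i _ => by
        rw [ha0 i, zero_sub, abs_neg, abs_of_nonneg (hb i)]
    have hm0 : min A B * (∑ i, |A⁻¹ * a i - B⁻¹ * b i|) = 0 := by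
      rw [hmin, ← h0, zero_mul]
    constructor
    · rw [hm0]
      have h1 : 0 ≤ ∑ i, |a i - b i| := Finset.sum_nonneg fun i _ => abs_nonneg _
      linarith [abs_nonneg (A - B)]
    · rw [hm0, hsb, habs, zero_add]
      linarith
  · have hB0' : 0 < B := lt_of_lt_of_le h0 hAB
    have h1AB : 0 ≤ 1 - A/B := by
      rw [sub_nonneg]
      exact (div_le_one hB0').mpr hAB
    have key1 : ∀ i, A * |A⁻¹ * a i - B⁻¹ * b i| ≤ |a i - b i| + (1 - A/B) * b i := by
      intro i
      have e : A * (A⁻¹ * a i - B⁻¹ * b i) = (a i - b i) + (1 - A/B) * b i := by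
        field_simp
        ring
      calc A * |A⁻¹ * a i - B⁻¹ * b i| = |A| * |A⁻¹ * a i - B⁻¹ * b i| := by
            rw [abs_of_pos h0]
        _ = |(a i - b i) + (1 - A/B) * b i| := by rw [← abs_mul, e]
        _ ≤ |a i - b i| + |(1 - A/B) * b i| := abs_add_le _ _
        _ = |a i - b i| + (1 - A/B) * b i := by
            rw [abs_of_nonneg (mul_nonneg h1AB (hb i))]
    have key2 : ∀ i, |a i - b i| ≤ A * |A⁻¹ * a i - B⁻¹ * b i| + (1 - A/B) * b i := by
      intro i
      have e : A * (A⁻¹ * a i - B⁻¹ * b i) = (a i - b i) + (1 - A/B) * b i := by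
        field_simp
        ring
      have h1 : |(a i - b i) + (1 - A/B) * b i| = A * |A⁻¹ * a i - B⁻¹ * b i| := by
        rw [← e, abs_mul, abs_of_pos h0]
      have h2 : |a i - b i| ≤ |(a i - b i) + (1 - A/B) * b i| + |(1 - A/B) * b i| := by
        have := abs_add_le ((a i - b i) + (1 - A/B) * b i) (-((1 - A/B) * b i))
        simpa using this
      rw [h1, abs_of_nonneg (mul_nonneg h1AB (hb i))] at h2
      exact h2
    have hrest : (∑ i, (1 - A/B) * b i) = B - A := by
      rw [← Finset.mul_sum, hB]
      field_simp
    constructor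
    · rw [hmin, Finset.mul_sum, habs]
      calc (∑ i, A * |A⁻¹ * a i - B⁻¹ * b i|)
          ≤ ∑ i, (|a i - b i| + (1 - A/B) * b i) :=
            Finset.sum_le_sum fun i _ => key1 i
        _ = (∑ i, |a i - b i|) + (B - A) := by rw [Finset.sum_add_distrib, hrest]
    · rw [hmin, Finset.mul_sum, habs]
      calc (∑ i, |a i - b i|)
          ≤ ∑ i, (A * |A⁻¹ * a i - B⁻¹ * b i| + (1 - A/B) * b i) :=
            Finset.sum_le_sum fun i _ => key2 i
        _ = (∑ i, A * |A⁻¹ * a i - B⁻¹ * b i|) + (B - A) := by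
            rw [Finset.sum_add_distrib, hrest]

lemma FG_key {ι : Type*} [Fintype ι] (a b : ι → ℝ) (A B : ℝ)
    (ha : ∀ i, 0 ≤ a i) (hb : ∀ i, 0 ≤ b i)
    (hA : ∑ i, a i = A) (hB : ∑ i, b i = B) :
    min A B * (∑ i, |A⁻¹ * a i - B⁻¹ * b i|) ≤ (∑ i, |a i - b i|) + |A - B| ∧
    (∑ i, |a i - b i|) ≤ min A B * (∑ i, |A⁻¹ * a i - B⁻¹ * b i|) + |A - B| := by
  rcases le_total A B with h | h
  · exact FG_key_aux a b A B h ha hb hA hB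
  · have H := FG_key_aux b a B A h hb ha hB hA
    have e1 : (∑ i, |B⁻¹ * b i - A⁻¹ * a i|) = ∑ i, |A⁻¹ * a i - B⁻¹ * b i| :=
      Finset.sum_congr rfl fun i _ => abs_sub_comm _ _
    have e2 : (∑ i, |b i - a i|) = ∑ i, |a i - b i| :=
      Finset.sum_congr rfl fun i _ => abs_sub_comm _ _
    rw [e1, e2, min_comm B A, abs_sub_comm B A] at H
    exact H
lemma FG_tsum_claim (q : ℝ) (hq0 : 0 < q) (hq1 : q < 1) (c : ℝ) (hc : 0 < c)
    (hcG : c * (q * (1 - q)⁻¹) = 1/2)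
    (S T : ℕ → ℝ) (m : ℝ) (hm : 0 ≤ m) (hm2 : m ≤ 2)
    (hS0 : ∀ ℓ, 0 ≤ S ℓ) (hS2 : ∀ ℓ, S ℓ ≤ 2)
    (hT0 : ∀ ℓ, 0 ≤ T ℓ) (hT2 : ∀ ℓ, T ℓ ≤ 2)
    (h1 : ∀ ℓ : ℕ, m * T (ℓ+1) ≤ S (ℓ+1) + S 0)
    (h2 : ∀ ℓ : ℕ, S (ℓ+1) ≤ m * T (ℓ+1) + S 0) :
    S 0 + m * (c * ∑' ℓ : ℕ, q^(ℓ+1) * T (ℓ+1)) ≤ (3/2 + c) * ∑' ℓ : ℕ, q^ℓ * S ℓ ∧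
    (∑' ℓ : ℕ, q^ℓ * S ℓ) ≤
      (1 + q * (1-q)⁻¹ + c⁻¹) * (S 0 + m * (c * ∑' ℓ : ℕ, q^(ℓ+1) * T (ℓ+1))) := by
  have hq0' : (0:ℝ) ≤ q := hq0.le
  have hqp : ∀ ℓ : ℕ, (0:ℝ) ≤ q ^ ℓ := fun ℓ => pow_nonneg hq0' ℓ
  have sq : Summable (fun ℓ : ℕ => q ^ ℓ) := summable_geometric_of_lt_one hq0' hq1
  have sq1 : Summable (fun ℓ : ℕ => q ^ (ℓ+1)) := by
    have : (fun ℓ : ℕ => q ^ (ℓ+1)) = fun ℓ : ℕ => q ^ ℓ * q := by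
      funext ℓ; rw [pow_succ]
    rw [this]; exact sq.mul_right q
  have hGsum : (∑' ℓ : ℕ, q ^ (ℓ+1)) = q * (1-q)⁻¹ := by
    have e : (fun ℓ : ℕ => q ^ (ℓ+1)) = fun ℓ : ℕ => q * q ^ ℓ := by
      funext ℓ; rw [pow_succ]; ring
    rw [e, _root_.tsum_mul_left, tsum_geometric_of_lt_one hq0' hq1]
  have sqS : Summable (fun ℓ : ℕ => q ^ ℓ * S ℓ) := by
    apply Summable.of_nonneg_of_le (fun ℓ => mul_nonneg (hqp ℓ) (hS0 ℓ))
      (fun ℓ => mul_le_mul_of_nonneg_left (hS2 ℓ) (hqp ℓ)) (sq.mul_right 2)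
  have sqS' : Summable (fun ℓ : ℕ => q ^ (ℓ+1) * S (ℓ+1)) := by
    have := sqS.comp_injective (add_left_injective 1)
    exact this
  have sqmT' : Summable (fun ℓ : ℕ => q ^ (ℓ+1) * (m * T (ℓ+1))) := by
    apply Summable.of_nonneg_of_le
      (fun ℓ => mul_nonneg (hqp (ℓ+1)) (mul_nonneg hm (hT0 (ℓ+1))))
      (fun ℓ => mul_le_mul_of_nonneg_left (by nlinarith [hT2 (ℓ+1), hT0 (ℓ+1)]) (hqp (ℓ+1)))
      (sq1.mul_right 4)
  have sqS0 : Summable (fun ℓ : ℕ => q ^ (ℓ+1) * S 0) := sq1.mul_right (S 0)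
  set X := ∑' ℓ : ℕ, q ^ ℓ * S ℓ with hX
  set Y := ∑' ℓ : ℕ, q ^ (ℓ+1) * S (ℓ+1) with hY
  set Z := ∑' ℓ : ℕ, q ^ (ℓ+1) * (m * T (ℓ+1)) with hZ
  set G := q * (1-q)⁻¹ with hG
  have hG0 : 0 ≤ G := mul_nonneg hq0' (inv_nonneg.mpr (by linarith))
  have hZ0 : 0 ≤ Z := tsum_nonneg fun ℓ =>
    mul_nonneg (hqp (ℓ+1)) (mul_nonneg hm (hT0 (ℓ+1)))
  have hY0 : 0 ≤ Y := tsum_nonneg fun ℓ => mul_nonneg (hqp (ℓ+1)) (hS0 (ℓ+1))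
  have e1 : m * (c * ∑' ℓ : ℕ, q^(ℓ+1) * T (ℓ+1)) = c * Z := by
    rw [hZ, show (∑' ℓ : ℕ, q^(ℓ+1) * (m * T (ℓ+1)))
        = ∑' ℓ : ℕ, m * (q^(ℓ+1) * T (ℓ+1)) from tsum_congr fun ℓ => by ring,
      _root_.tsum_mul_left]
    ring
  have hsplit : (∑' ℓ : ℕ, (q^(ℓ+1) * S (ℓ+1) + q^(ℓ+1) * S 0)) = Y + S 0 * G := by
    rw [Summable.tsum_add sqS' sqS0, _root_.tsum_mul_right, hGsum]
    ring
  have hZle : Z ≤ Y + S 0 * G := by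
    rw [← hsplit]
    apply Summable.tsum_le_tsum _ sqmT' (sqS'.add sqS0)
    intro ℓ
    have := mul_le_mul_of_nonneg_left (h1 ℓ) (hqp (ℓ+1))
    linarith [this]
  have hYle : Y ≤ X := by
    apply Summable.tsum_le_tsum_of_inj (fun ℓ : ℕ => ℓ + 1) (add_left_injective 1)
      (fun j _ => mul_nonneg (hqp j) (hS0 j)) (fun ℓ => le_rfl) sqS' sqS
  have hS0X : S 0 ≤ X := by
    have := Summable.le_tsum sqS 0 (fun j _ => mul_nonneg (hqp j) (hS0 j))
    simpa using this
  have hXeq : X = S 0 + Y := by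
    rw [hX, Summable.tsum_eq_zero_add sqS]
    simp [hY]
  have hsplit2 : (∑' ℓ : ℕ, (q^(ℓ+1) * (m * T (ℓ+1)) + q^(ℓ+1) * S 0)) = Z + S 0 * G := by
    rw [Summable.tsum_add sqmT' sqS0, _root_.tsum_mul_right, hGsum, ← hZ]
    ring
  have hYle2 : Y ≤ Z + S 0 * G := by
    rw [← hsplit2]
    apply Summable.tsum_le_tsum _ sqS' (sqmT'.add sqS0)
    intro ℓ
    have h2' := mul_le_mul_of_nonneg_left (h2 ℓ) (hqp (ℓ+1))
    have hs := hsplit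
    calc q^(ℓ+1) * S (ℓ+1) ≤ q^(ℓ+1) * (m * T (ℓ+1) + S 0) := h2'
      _ = q^(ℓ+1) * (m * T (ℓ+1)) + q^(ℓ+1) * S 0 := by ring
  constructor
  · rw [e1]
    have hcZ : c * Z ≤ c * Y + S 0 / 2 := by
      have h := mul_le_mul_of_nonneg_left hZle hc.le
      have e : c * (Y + S 0 * G) = c * Y + S 0 * (c * G) := by ring
      rw [e, hcG] at h
      linarith
    have hcY : c * Y ≤ c * X := mul_le_mul_of_nonneg_left hYle hc.le
    nlinarith [hS0 0]
  · have hXle : X ≤ S 0 + Z + S 0 * G := by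
      rw [hXeq]; linarith [hYle2]
    have hinv : c⁻¹ * (c * Z) = Z := by
      field_simp
    rw [e1]
    nlinarith [hS0 0, mul_nonneg (inv_nonneg.mpr hc.le) (hS0 0),
      mul_nonneg hG0 (mul_nonneg hc.le hZ0), mul_nonneg hc.le hZ0, hinv,
      mul_nonneg hG0 (hS0 0)]
def FGSsum (d : ℕ) (μ ν : Measure (EuclideanSpace ℝ (Fin d))) (n ℓ : ℕ) : ℝ :=
  ∑ k : Fin d → Fin (2 ^ ℓ),
    |(μ ((fun x : EuclideanSpace ℝ (Fin d) => (2:ℝ)^n • x) '' cube d ℓ k ∩ Bset d n)).toReal -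
      (ν ((fun x : EuclideanSpace ℝ (Fin d) => (2:ℝ)^n • x) '' cube d ℓ k ∩ Bset d n)).toReal|

lemma FG_toReal_le_one {d : ℕ} (μ : Measure (EuclideanSpace ℝ (Fin d)))
    [IsProbabilityMeasure μ] (s : Set (EuclideanSpace ℝ (Fin d))) : (μ s).toReal ≤ 1 := by
  have h : μ s ≤ 1 := prob_le_one
  simpa using ENNReal.toReal_mono one_ne_top h

lemma FG_abs_sub_le (x y : ℝ) (hx : 0 ≤ x) (hy : 0 ≤ y) : |x - y| ≤ x + y :=
  abs_le.mpr ⟨by linarith, by linarith⟩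

lemma FG_inv_mul_le_one (x : ℝ) : x⁻¹ * x ≤ 1 := by
  rcases eq_or_ne x 0 with h | h
  · simp [h]
  · rw [inv_mul_cancel₀ h]

lemma FG_one_lt_rpow (p : ℝ) (hp : 0 < p) : (1:ℝ) < 2 ^ p := by
  have := Real.rpow_lt_rpow_of_exponent_lt (x := 2) one_lt_two hp
  simpa using this

lemma FG_claim_n (d : ℕ) (p : ℝ) (hp : 0 < p) (μ ν : Measure (EuclideanSpace ℝ (Fin d)))
    [hμ : IsProbabilityMeasure μ] [hν : IsProbabilityMeasure ν] (n : ℕ) :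
    (|(μ (Bset d n)).toReal - (ν (Bset d n)).toReal| +
      min (μ (Bset d n)).toReal (ν (Bset d n)).toReal *
        DpCpt d p (Rres d n μ) (Rres d n ν))
      ≤ (3/2 + ((2:ℝ)^p - 1)/2) *
          (∑' ℓ : ℕ, (2:ℝ)^(-(p*(ℓ:ℝ))) * FGSsum d μ ν n ℓ) ∧
    (∑' ℓ : ℕ, (2:ℝ)^(-(p*(ℓ:ℝ))) * FGSsum d μ ν n ℓ)
      ≤ (1 + (2:ℝ)^(-p) * (1 - (2:ℝ)^(-p))⁻¹ + (((2:ℝ)^p - 1)/2)⁻¹) *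
        (|(μ (Bset d n)).toReal - (ν (Bset d n)).toReal| +
          min (μ (Bset d n)).toReal (ν (Bset d n)).toReal *
            DpCpt d p (Rres d n μ) (Rres d n ν)) := by
  set q : ℝ := (2:ℝ)^(-p) with hqdef
  set c : ℝ := ((2:ℝ)^p - 1)/2 with hcdef
  have hq0 : 0 < q := Real.rpow_pos_of_pos two_pos _
  have hq1 : q < 1 := Real.rpow_lt_one_of_one_lt_of_neg one_lt_two (by linarith)
  have h2p : (1:ℝ) < 2 ^ p := FG_one_lt_rpow p hp
  have hc : 0 < c := by rw [hcdef]; linarith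
  have hqr : q * (2:ℝ)^p = 1 := by
    rw [hqdef, ← Real.rpow_add two_pos]
    simp
  have hcG : c * (q * (1 - q)⁻¹) = 1/2 := by
    have h1q : (1:ℝ) - q ≠ 0 := by linarith
    rw [hcdef]
    field_simp
    linear_combination hqr
  set A : ℝ := (μ (Bset d n)).toReal with hA
  set B : ℝ := (ν (Bset d n)).toReal with hB
  set m : ℝ := min A B with hm
  set S : ℕ → ℝ := FGSsum d μ ν n with hS
  set T : ℕ → ℝ := fun ℓ => ∑ k : Fin d → Fin (2 ^ ℓ),
    |(Rres d n μ (cube d ℓ k)).toReal - (Rres d n ν (cube d ℓ k)).toReal| with hT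
  have hDpCpt : DpCpt d p (Rres d n μ) (Rres d n ν)
      = c * ∑' ℓ : ℕ, q^(ℓ+1) * T (ℓ+1) := by
    rw [DpCpt]
    congr 1
    refine tsum_congr fun ℓ => ?_
    congr 1
    rw [hqdef, ← Real.rpow_natCast ((2:ℝ)^(-p)) (ℓ+1), ← Real.rpow_mul (by norm_num)]
    push_cast
    ring_nf
  have hw1 : ∀ ℓ : ℕ, (2:ℝ)^(-(p*(ℓ:ℝ))) = q^ℓ := by
    intro ℓ
    rw [hqdef, ← Real.rpow_natCast ((2:ℝ)^(-p)) ℓ, ← Real.rpow_mul (by norm_num)]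
    ring_nf
  have hW : (∑' ℓ : ℕ, (2:ℝ)^(-(p*(ℓ:ℝ))) * S ℓ) = ∑' ℓ : ℕ, q^ℓ * S ℓ :=
    tsum_congr fun ℓ => by rw [hw1 ℓ]
  -- basic bounds
  have hA1 : A ≤ 1 := FG_toReal_le_one μ _
  have hB1 : B ≤ 1 := FG_toReal_le_one ν _
  have hA0 : 0 ≤ A := ENNReal.toReal_nonneg
  have hB0 : 0 ≤ B := ENNReal.toReal_nonneg
  have hm0 : 0 ≤ m := le_min hA0 hB0
  have hm2 : m ≤ 2 := le_trans (min_le_left _ _) (by linarith)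
  have haux : ∀ ℓ : ℕ, ∀ k : Fin d → Fin (2^ℓ),
      (0:ℝ) ≤ (μ ((fun x : EuclideanSpace ℝ (Fin d) => (2:ℝ)^n • x) '' cube d ℓ k ∩
        Bset d n)).toReal := fun _ _ => ENNReal.toReal_nonneg
  have hS0 : ∀ ℓ, 0 ≤ S ℓ := fun ℓ => Finset.sum_nonneg fun k _ => abs_nonneg _
  have hS2 : ∀ ℓ, S ℓ ≤ 2 := by
    intro ℓ
    have : S ℓ ≤ ∑ k : Fin d → Fin (2^ℓ),
        ((μ ((fun x : EuclideanSpace ℝ (Fin d) => (2:ℝ)^n • x) '' cube d ℓ k ∩ Bset d n)).toReal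
        + (ν ((fun x : EuclideanSpace ℝ (Fin d) => (2:ℝ)^n • x) '' cube d ℓ k ∩ Bset d n)).toReal) := by
      refine Finset.sum_le_sum fun k _ => ?_
      exact FG_abs_sub_le _ _ (haux ℓ k) ENNReal.toReal_nonneg
    rw [Finset.sum_add_distrib, FG_sum_toReal d n ℓ μ, FG_sum_toReal d n ℓ ν] at this
    calc S ℓ ≤ A + B := this
      _ ≤ 2 := by linarith
  have hTeq : ∀ ℓ, T ℓ = ∑ k : Fin d → Fin (2^ℓ),
      |A⁻¹ * (μ ((fun x : EuclideanSpace ℝ (Fin d) => (2:ℝ)^n • x) '' cube d ℓ k ∩ Bset d n)).toReal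
        - B⁻¹ * (ν ((fun x : EuclideanSpace ℝ (Fin d) => (2:ℝ)^n • x) '' cube d ℓ k ∩ Bset d n)).toReal| := by
    intro ℓ
    exact Finset.sum_congr rfl fun k _ => by rw [FG_Rres_toReal, FG_Rres_toReal]
  have hT0 : ∀ ℓ, 0 ≤ T ℓ := fun ℓ => Finset.sum_nonneg fun k _ => abs_nonneg _
  have hT2 : ∀ ℓ, T ℓ ≤ 2 := by
    intro ℓ
    rw [hTeq ℓ]
    have hle : ∀ k : Fin d → Fin (2^ℓ),
        |A⁻¹ * (μ ((fun x : EuclideanSpace ℝ (Fin d) => (2:ℝ)^n • x) '' cube d ℓ k ∩ Bset d n)).toReal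
          - B⁻¹ * (ν ((fun x : EuclideanSpace ℝ (Fin d) => (2:ℝ)^n • x) '' cube d ℓ k ∩ Bset d n)).toReal|
        ≤ A⁻¹ * (μ ((fun x : EuclideanSpace ℝ (Fin d) => (2:ℝ)^n • x) '' cube d ℓ k ∩ Bset d n)).toReal
          + B⁻¹ * (ν ((fun x : EuclideanSpace ℝ (Fin d) => (2:ℝ)^n • x) '' cube d ℓ k ∩ Bset d n)).toReal := by
      intro k
      exact FG_abs_sub_le _ _ (mul_nonneg (inv_nonneg.mpr hA0) ENNReal.toReal_nonneg)
        (mul_nonneg (inv_nonneg.mpr hB0) ENNReal.toReal_nonneg)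
    calc (∑ k : Fin d → Fin (2^ℓ), |_ - _|)
        ≤ ∑ k : Fin d → Fin (2^ℓ), (A⁻¹ * (μ _).toReal + B⁻¹ * (ν _).toReal) :=
          Finset.sum_le_sum fun k _ => hle k
      _ = A⁻¹ * A + B⁻¹ * B := by
          rw [Finset.sum_add_distrib, ← Finset.mul_sum, ← Finset.mul_sum,
            FG_sum_toReal d n ℓ μ, FG_sum_toReal d n ℓ ν]
      _ ≤ 2 := by linarith [FG_inv_mul_le_one A, FG_inv_mul_le_one B]
  have hS0eq : S 0 = |A - B| := FG_S0 d n μ ν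
  have hpair : ∀ ℓ, m * T ℓ ≤ S ℓ + S 0 ∧ S ℓ ≤ m * T ℓ + S 0 := by
    intro ℓ
    rw [hTeq ℓ, hS0eq]
    exact FG_key _ _ A B (haux ℓ) (fun k => ENNReal.toReal_nonneg)
      (FG_sum_toReal d n ℓ μ) (FG_sum_toReal d n ℓ ν)
  have main := FG_tsum_claim q hq0 hq1 c hc hcG S T m hm0 hm2 hS0 hS2 hT0 hT2
    (fun ℓ => (hpair (ℓ+1)).1) (fun ℓ => (hpair (ℓ+1)).2)
  constructor
  · rw [hW, ← hS0eq, hDpCpt]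
    exact main.1
  · rw [hW, ← hS0eq, hDpCpt]
    exact main.2

def FGF (d : ℕ) (p : ℝ) (μ ν : Measure (EuclideanSpace ℝ (Fin d))) (n : ℕ) : ℝ :=
  (2:ℝ)^(p*(n:ℝ)) * ∑' ℓ : ℕ, (2:ℝ)^(-(p*(ℓ:ℝ))) * FGSsum d μ ν n ℓ

def FGD (d : ℕ) (p : ℝ) (μ ν : Measure (EuclideanSpace ℝ (Fin d))) (n : ℕ) : ℝ :=
  (2:ℝ)^(p*(n:ℝ)) * (|(μ (Bset d n)).toReal - (ν (Bset d n)).toReal| +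
    min (μ (Bset d n)).toReal (ν (Bset d n)).toReal *
      DpCpt d p (Rres d n μ) (Rres d n ν))

lemma FG_DpCpt_nonneg (d : ℕ) (p : ℝ) (hp : 0 < p)
    (M N : Measure (EuclideanSpace ℝ (Fin d))) : 0 ≤ DpCpt d p M N := by
  have h2p : (1:ℝ) < 2 ^ p := FG_one_lt_rpow p hp
  refine mul_nonneg (by linarith) (tsum_nonneg fun ℓ => mul_nonneg ?_ ?_)
  · exact Real.rpow_nonneg (by norm_num) _
  · exact Finset.sum_nonneg fun k _ => abs_nonneg _

lemma FG_FGF_nonneg (d : ℕ) (p : ℝ) (μ ν : Measure (EuclideanSpace ℝ (Fin d))) (n : ℕ) :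
    0 ≤ FGF d p μ ν n := by
  refine mul_nonneg (Real.rpow_nonneg (by norm_num) _) (tsum_nonneg fun ℓ => mul_nonneg ?_ ?_)
  · exact Real.rpow_nonneg (by norm_num) _
  · exact Finset.sum_nonneg fun k _ => abs_nonneg _

lemma FG_FGD_nonneg (d : ℕ) (p : ℝ) (hp : 0 < p)
    (μ ν : Measure (EuclideanSpace ℝ (Fin d))) (n : ℕ) : 0 ≤ FGD d p μ ν n := by
  refine mul_nonneg (Real.rpow_nonneg (by norm_num) _) ?_
  have h1 : (0:ℝ) ≤ |(μ (Bset d n)).toReal - (ν (Bset d n)).toReal| := abs_nonneg _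
  have h2 : (0:ℝ) ≤ min (μ (Bset d n)).toReal (ν (Bset d n)).toReal :=
    le_min ENNReal.toReal_nonneg ENNReal.toReal_nonneg
  have h3 := FG_DpCpt_nonneg d p hp (Rres d n μ) (Rres d n ν)
  nlinarith

lemma FG_D_le (d : ℕ) (p : ℝ) (hp : 0 < p) (μ ν : Measure (EuclideanSpace ℝ (Fin d)))
    [IsProbabilityMeasure μ] [IsProbabilityMeasure ν] (n : ℕ) :
    FGD d p μ ν n ≤ (3/2 + ((2:ℝ)^p - 1)/2) * FGF d p μ ν n := by
  have h1 := (FG_claim_n d p hp μ ν n).1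
  have h2 : (0:ℝ) ≤ (2:ℝ)^(p*(n:ℝ)) := Real.rpow_nonneg (by norm_num) _
  calc FGD d p μ ν n
      ≤ (2:ℝ)^(p*(n:ℝ)) * ((3/2 + ((2:ℝ)^p - 1)/2) *
          (∑' ℓ : ℕ, (2:ℝ)^(-(p*(ℓ:ℝ))) * FGSsum d μ ν n ℓ)) :=
        mul_le_mul_of_nonneg_left h1 h2
    _ = (3/2 + ((2:ℝ)^p - 1)/2) * FGF d p μ ν n := by rw [FGF]; ring

lemma FG_F_le (d : ℕ) (p : ℝ) (hp : 0 < p) (μ ν : Measure (EuclideanSpace ℝ (Fin d)))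
    [IsProbabilityMeasure μ] [IsProbabilityMeasure ν] (n : ℕ) :
    FGF d p μ ν n ≤ (1 + (2:ℝ)^(-p) * (1 - (2:ℝ)^(-p))⁻¹ + (((2:ℝ)^p - 1)/2)⁻¹) *
      FGD d p μ ν n := by
  have h1 := (FG_claim_n d p hp μ ν n).2
  have h2 : (0:ℝ) ≤ (2:ℝ)^(p*(n:ℝ)) := Real.rpow_nonneg (by norm_num) _
  calc FGF d p μ ν n
      ≤ (2:ℝ)^(p*(n:ℝ)) * ((1 + (2:ℝ)^(-p) * (1 - (2:ℝ)^(-p))⁻¹ + (((2:ℝ)^p - 1)/2)⁻¹) *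
          (|(μ (Bset d n)).toReal - (ν (Bset d n)).toReal| +
            min (μ (Bset d n)).toReal (ν (Bset d n)).toReal *
              DpCpt d p (Rres d n μ) (Rres d n ν))) :=
        mul_le_mul_of_nonneg_left h1 h2
    _ = (1 + (2:ℝ)^(-p) * (1 - (2:ℝ)^(-p))⁻¹ + (((2:ℝ)^p - 1)/2)⁻¹) * FGD d p μ ν n := by
        rw [FGD]; ring

/-- Lemma 6 of Fournier-Guillin: `D_p(μ,ν)` is bounded by the weighted sums of
`|μ(2^n F ∩ B_n) - ν(2^n F ∩ B_n)|` over the dyadic partitions. -/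
theorem Dp_le_sum_dyadic (d : ℕ) (hd : 1 ≤ d) (p : ℝ) (hp : 0 < p) :
    ∃ C : ℝ, 0 < C ∧
      ∀ μ ν : Measure (EuclideanSpace ℝ (Fin d)),
        IsProbabilityMeasure μ → IsProbabilityMeasure ν →
        Dp d p μ ν ≤
          C * ∑' n : ℕ, (2 : ℝ) ^ (p * n) * ∑' ℓ : ℕ, (2 : ℝ) ^ (-(p * ℓ)) *
            ∑ k : Fin d → Fin (2 ^ ℓ),
              |(μ ((fun x : EuclideanSpace ℝ (Fin d) => (2 : ℝ) ^ n • x) '' cube d ℓ k ∩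
                  Bset d n)).toReal -
                (ν ((fun x : EuclideanSpace ℝ (Fin d) => (2 : ℝ) ^ n • x) '' cube d ℓ k ∩
                  Bset d n)).toReal| := by
  have h2p : (1:ℝ) < 2 ^ p := FG_one_lt_rpow p hp
  refine ⟨3/2 + ((2:ℝ)^p - 1)/2, by linarith, ?_⟩
  intro μ ν hμ hν
  set C : ℝ := 3/2 + ((2:ℝ)^p - 1)/2 with hC
  set K : ℝ := 1 + (2:ℝ)^(-p) * (1 - (2:ℝ)^(-p))⁻¹ + (((2:ℝ)^p - 1)/2)⁻¹ with hK
  have hC0 : 0 < C := by rw [hC]; linarith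
  have hgoal_eq : (∑' n : ℕ, (2 : ℝ) ^ (p * n) * ∑' ℓ : ℕ, (2 : ℝ) ^ (-(p * ℓ)) *
      ∑ k : Fin d → Fin (2 ^ ℓ),
        |(μ ((fun x : EuclideanSpace ℝ (Fin d) => (2 : ℝ) ^ n • x) '' cube d ℓ k ∩
            Bset d n)).toReal -
          (ν ((fun x : EuclideanSpace ℝ (Fin d) => (2 : ℝ) ^ n • x) '' cube d ℓ k ∩
            Bset d n)).toReal|) = ∑' n : ℕ, FGF d p μ ν n := rfl
  have hDp_eq : Dp d p μ ν = ∑' n : ℕ, FGD d p μ ν n := rfl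
  rw [hgoal_eq, hDp_eq]
  have hDF : ∀ n, FGD d p μ ν n ≤ C * FGF d p μ ν n := FG_D_le d p hp μ ν
  have hFD : ∀ n, FGF d p μ ν n ≤ K * FGD d p μ ν n := FG_F_le d p hp μ ν
  have hD0 : ∀ n, 0 ≤ FGD d p μ ν n := FG_FGD_nonneg d p hp μ ν
  have hF0 : ∀ n, 0 ≤ FGF d p μ ν n := FG_FGF_nonneg d p μ ν
  by_cases hsum : Summable (FGF d p μ ν)
  · have hCs : Summable (fun n => C * FGF d p μ ν n) := hsum.mul_left C
    have hDs : Summable (FGD d p μ ν) := Summable.of_nonneg_of_le hD0 hDF hCs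
    calc (∑' n : ℕ, FGD d p μ ν n) ≤ ∑' n : ℕ, C * FGF d p μ ν n :=
          Summable.tsum_le_tsum hDF hDs hCs
      _ = C * ∑' n : ℕ, FGF d p μ ν n := _root_.tsum_mul_left
  · have hnD : ¬ Summable (FGD d p μ ν) := by
      intro hD
      exact hsum (Summable.of_nonneg_of_le hF0 hFD (hD.mul_left K))
    rw [tsum_eq_zero_of_not_summable hnD]
    exact mul_nonneg hC0.le (tsum_nonneg hF0)


end
end

section
/- Let N ≥ 1 and let X be a Poisson(N)-distributed random variable. Then for every integer k with 0 ≤ k ≤ ⌊√N⌋, P(X = N + k) ≥ κ_0 N^{−1/2}, where κ_0 = e^{−2}/√2. -/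
open MeasureTheory ProbabilityTheory Real Set ENNReal NNReal

noncomputable section

section Aux
open Real Nat


lemma stirling_upper (n : ℕ) (hn : 1 ≤ n) :
    (n ! : ℝ) ≤ Real.exp 1 * Real.sqrt n * ((n : ℝ) / Real.exp 1) ^ n := by
  have h := Stirling.stirlingSeq'_antitone (Nat.zero_le (n - 1))
  simp only [Function.comp_apply, Nat.succ_eq_add_one, Nat.sub_add_cancel hn, zero_add,
    Stirling.stirlingSeq_one] at h
  have hd : (0:ℝ) < Real.sqrt (2 * n) * ((n : ℝ) / Real.exp 1) ^ n := by
    have : (0:ℝ) < (n:ℝ) := by exact_mod_cast hn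
    positivity
  rw [Stirling.stirlingSeq, div_le_iff₀ hd] at h
  calc (n ! : ℝ) ≤ Real.exp 1 / Real.sqrt 2 * (Real.sqrt (2 * n) * ((n:ℝ)/Real.exp 1) ^ n) := h
    _ = Real.exp 1 * Real.sqrt n * ((n : ℝ) / Real.exp 1) ^ n := by
        rw [Real.sqrt_mul (by norm_num)]
        have h2 : Real.sqrt 2 ≠ 0 := by positivity
        field_simp

lemma key_real (N k : ℕ) (hN1 : 1 ≤ N) (hk : k * k ≤ N) (hkN : k ≤ N) :
    Real.exp (-2) / Real.sqrt 2 * (N : ℝ) ^ (-(1 : ℝ)/2) ≤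
      Real.exp (-(N : ℝ)) * (N : ℝ) ^ (N + k) / ((N + k)! : ℝ) := by
  have hNpos : (0:ℝ) < N := by exact_mod_cast hN1
  have hnn : 1 ≤ N + k := le_add_right hN1
  have hnpos : (0:ℝ) < ((N + k : ℕ) : ℝ) := by exact_mod_cast hnn
  have hfpos : (0:ℝ) < ((N + k)! : ℝ) := by exact_mod_cast Nat.factorial_pos (N + k)
  have hrpow : (N:ℝ) ^ (-(1:ℝ)/2) = (Real.sqrt N)⁻¹ := by
    rw [show -(1:ℝ)/2 = -(1/2) by ring, Real.rpow_neg hNpos.le, Real.sqrt_eq_rpow]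
  rw [hrpow, le_div_iff₀ hfpos]
  have hsqrt : Real.sqrt ((N : ℝ) + k) ≤ Real.sqrt 2 * Real.sqrt N := by
    rw [← Real.sqrt_mul (by norm_num)]
    apply Real.sqrt_le_sqrt
    have : (k:ℝ) ≤ N := by exact_mod_cast hkN
    linarith
  have hpow : ((N:ℝ) + k) ^ (N + k) ≤ (N:ℝ) ^ (N + k) * Real.exp (k + 1) := by
    have h1 : (N:ℝ) + k = N * (1 + k / N) := by field_simp
    have h2 : (1 + (k:ℝ) / N) ≤ Real.exp ((k:ℝ) / N) := by
      have := Real.add_one_le_exp ((k:ℝ)/N); linarith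
    have h3 : (1 + (k:ℝ) / N) ^ (N + k) ≤ Real.exp ((k:ℝ)/N) ^ (N + k) := by
      apply pow_le_pow_left₀ (by positivity) h2
    have h4 : Real.exp ((k:ℝ)/N) ^ (N + k) = Real.exp (((N:ℝ) + k) * (k / N)) := by
      rw [← Real.exp_nat_mul]; push_cast; ring_nf
    have h5 : ((N:ℝ) + k) * ((k:ℝ) / N) ≤ (k:ℝ) + 1 := by
      have hkk : (k:ℝ) * k ≤ N := by exact_mod_cast hk
      have heq : ((N:ℝ) + k) * ((k:ℝ) / N) = (((N:ℝ) + k) * k) / N := by ring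
      rw [heq, div_le_iff₀ hNpos]
      nlinarith
    have h6 : (1 + (k:ℝ) / N) ^ (N + k) ≤ Real.exp ((k:ℝ) + 1) := by
      calc _ ≤ Real.exp ((k:ℝ)/N) ^ (N + k) := h3
        _ = Real.exp (((N:ℝ) + k) * (k / N)) := h4
        _ ≤ Real.exp ((k:ℝ) + 1) := Real.exp_le_exp.mpr h5
    calc ((N:ℝ) + k) ^ (N + k) = (N:ℝ) ^ (N + k) * (1 + (k:ℝ)/N) ^ (N + k) := by
          rw [h1, mul_pow]
      _ ≤ (N:ℝ) ^ (N + k) * Real.exp (k + 1) := by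
          apply mul_le_mul_of_nonneg_left h6 (by positivity)
  have hfact := stirling_upper (N + k) hnn
  push_cast at hfact
  calc Real.exp (-2) / Real.sqrt 2 * (Real.sqrt N)⁻¹ * ((N + k)! : ℝ)
      ≤ Real.exp (-2) / Real.sqrt 2 * (Real.sqrt N)⁻¹ *
        (Real.exp 1 * Real.sqrt ((N:ℝ) + k) * (((N:ℝ) + k) / Real.exp 1) ^ (N + k)) := by
        apply mul_le_mul_of_nonneg_left hfact (by positivity)
    _ ≤ Real.exp (-2) / Real.sqrt 2 * (Real.sqrt N)⁻¹ *
        (Real.exp 1 * (Real.sqrt 2 * Real.sqrt N) *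
          ((N:ℝ) ^ (N + k) * Real.exp (k + 1) * (Real.exp 1 ^ (N + k))⁻¹)) := by
        apply mul_le_mul_of_nonneg_left _ (by positivity)
        rw [div_pow]
        have he : (0:ℝ) < Real.exp 1 ^ (N + k) := by positivity
        apply mul_le_mul
        · exact mul_le_mul_of_nonneg_left hsqrt (Real.exp_pos 1).le
        · rw [div_eq_mul_inv]
          apply mul_le_mul_of_nonneg_right hpow (by positivity)
        · positivity
        · positivity
    _ = Real.exp (-(N:ℝ)) * (N:ℝ) ^ (N + k) := by
        have hs2 : Real.sqrt 2 ≠ 0 := by positivity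
        have hsN : Real.sqrt (N:ℝ) ≠ 0 := by positivity
        have hE : Real.exp 1 ^ (N + k) = Real.exp ((N:ℝ) + k) := by
          rw [← Real.exp_nat_mul]; push_cast; ring_nf
        have he : Real.exp (-2) * Real.exp 1 * Real.exp ((k:ℝ) + 1) =
            Real.exp ((N:ℝ) + k) * Real.exp (-(N:ℝ)) := by
          rw [← Real.exp_add, ← Real.exp_add, ← Real.exp_add]
          congr 1; ring
        rw [hE]
        have hep : Real.exp ((N:ℝ) + k) ≠ 0 := by positivity
        field_simp
        linear_combination he

end Aux

/-- Lemma 12 of Fournier-Guillin: for `X` Poisson(`N`)-distributed and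
`0 ≤ k ≤ ⌊√N⌋`, `P(X = N + k) ≥ e^{-2} 2^{-1/2} N^{-1/2}`. -/
theorem poisson_mass_lower_bound
    (N : ℕ) (hN : 1 ≤ N)
    (Ω : Type) (_ : MeasurableSpace Ω) (P : Measure Ω) (hP : IsProbabilityMeasure P)
    (X : Ω → ℕ) (hXm : Measurable X)
    (hX : Measure.map X P = poissonMeasure (N : ℝ≥0)) :
    ∀ k : ℕ, k ≤ Nat.sqrt N →
      ENNReal.ofReal (Real.exp (-2) / Real.sqrt 2 * (N : ℝ) ^ (-(1 : ℝ) / 2)) ≤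
        P {ω | X ω = N + k} := by
  intro k hk
  have h1 : {ω | X ω = N + k} = X ⁻¹' {N + k} := rfl
  have h2 : P {ω | X ω = N + k} = ENNReal.ofReal (poissonPMFReal (N : ℝ≥0) (N + k)) := by
    rw [h1, ← Measure.map_apply hXm (measurableSet_singleton (N + k)), hX,
      poissonMeasure, Measure.sum_smul_dirac_singleton]
    rfl
  rw [h2]
  apply ENNReal.ofReal_le_ofReal
  have hkk : k * k ≤ N := Nat.le_trans (Nat.mul_le_mul hk hk) (Nat.sqrt_le N)
  have hkN : k ≤ N := le_trans hk (Nat.sqrt_le_self N)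
  have := key_real N k hN hkk hkN
  simpa [poissonPMFReal, NNReal.coe_natCast] using this

end
end

section
/- Let (X_n)_{n≥1} be a stationary sequence of ℝ^d-valued random variables with common law μ which is ρ-mixing for a sequence ρ: ℕ → ℝ⁺, and set μ_N := N^{−1} Σ_{i=1}^N δ_{X_i}. Then for every Borel set A ⊂ ℝ^d and every N ≥ 1, Var(μ_N(A)) ≤ μ(A)(1 − μ(A)) N^{−2} Σ_{i,j=1}^N ρ_{|i−j|}; in particular, if Σ_{k≥0} ρ_k < ∞ then E[|μ_N(A) − μ(A)|] ≤ min{2μ(A), C √(μ(A)/N)} where C depends only on Σ_{k≥0} ρ_k. -/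
open MeasureTheory ProbabilityTheory Real Set ENNReal NNReal

noncomputable section

lemma empMeas_toReal {d N : ℕ} (X : ℕ → EuclideanSpace ℝ (Fin d))
    {A : Set (EuclideanSpace ℝ (Fin d))} (hA : MeasurableSet A) :
    ((empMeas d N X) A).toReal
      = (N : ℝ)⁻¹ * ∑ k ∈ Finset.range N, A.indicator (fun _ => (1:ℝ)) (X k) := by
  have h1 : (empMeas d N X) A = (N : ℝ≥0∞)⁻¹ * ∑ k ∈ Finset.range N, Measure.dirac (X k) A := by
    simp [empMeas, Measure.smul_apply, Measure.finset_sum_apply]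
  rw [h1, ENNReal.toReal_mul, ENNReal.toReal_inv, ENNReal.toReal_natCast,
    ENNReal.toReal_sum (by intro k _; rw [Measure.dirac_apply' _ hA]; exact ne_top_of_le_ne_top one_ne_top (Set.indicator_le_self' (by simp) _))]
  congr 1
  refine Finset.sum_congr rfl fun k _ => ?_
  rw [Measure.dirac_apply' _ hA]
  by_cases h : X k ∈ A <;> simp [Set.indicator_apply, h]

variable {d : ℕ} {Ω : Type} [MeasurableSpace Ω] {P : Measure Ω}
  {X : ℕ → Ω → EuclideanSpace ℝ (Fin d)} {μ : Measure (EuclideanSpace ℝ (Fin d))}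
  {A : Set (EuclideanSpace ℝ (Fin d))}

lemma int_fX [IsProbabilityMeasure P] (hX : ∀ k, Measurable (X k))
    (hmap : ∀ k, Measure.map (X k) P = μ) (hA : MeasurableSet A) (i : ℕ) :
    ∫ ω, A.indicator (fun _ => (1:ℝ)) (X i ω) ∂P = (μ A).toReal := by
  have h := integral_map (μ := P) (φ := X i) (f := A.indicator (fun _ => (1:ℝ)))
    (hX i).aemeasurable ((stronglyMeasurable_const.indicator hA).aestronglyMeasurable)
  rw [← hmap i, ← h]
  exact integral_indicator_one (μ := Measure.map (X i) P) hA

lemma integrable_fX [IsProbabilityMeasure P] (hX : ∀ k, Measurable (X k))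
    (hA : MeasurableSet A) (i : ℕ) :
    Integrable (fun ω => A.indicator (fun _ => (1:ℝ)) (X i ω)) P := by
  have : (fun ω => A.indicator (fun _ => (1:ℝ)) (X i ω))
      = (X i ⁻¹' A).indicator (fun _ => (1:ℝ)) := by
    funext ω; by_cases h : X i ω ∈ A <;> simp [Set.indicator_apply, h]
  rw [this]
  exact (integrable_const 1).indicator ((hX i) hA)

lemma integrable_fXX [IsProbabilityMeasure P] (hX : ∀ k, Measurable (X k))
    (hA : MeasurableSet A) (i j : ℕ) :
    Integrable (fun ω => A.indicator (fun _ => (1:ℝ)) (X i ω)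
      * A.indicator (fun _ => (1:ℝ)) (X j ω)) P := by
  have : (fun ω => A.indicator (fun _ => (1:ℝ)) (X i ω) * A.indicator (fun _ => (1:ℝ)) (X j ω))
      = ((X i ⁻¹' A) ∩ (X j ⁻¹' A)).indicator (fun _ => (1:ℝ)) := by
    funext ω
    by_cases h1 : X i ω ∈ A <;> by_cases h2 : X j ω ∈ A <;>
      simp [Set.indicator_apply, h1, h2]
  rw [this]
  exact (integrable_const 1).indicator (((hX i) hA).inter ((hX j) hA))

lemma mean_S [IsProbabilityMeasure P] (hX : ∀ k, Measurable (X k))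
    (hmap : ∀ k, Measure.map (X k) P = μ) (hA : MeasurableSet A) {N : ℕ} (hN : 1 ≤ N) :
    ∫ ω, ((empMeas d N fun k => X k ω) A).toReal ∂P = (μ A).toReal := by
  have hN0 : (N : ℝ) ≠ 0 := Nat.cast_ne_zero.mpr (by omega)
  simp_rw [empMeas_toReal _ hA]
  rw [integral_const_mul, integral_finset_sum _ (fun i _ => integrable_fX hX hA i)]
  simp_rw [int_fX hX hmap hA]
  rw [Finset.sum_const, Finset.card_range, nsmul_eq_mul]
  field_simp

lemma var_S [IsProbabilityMeasure P] [IsProbabilityMeasure μ]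
    (ρ : ℕ → ℝ)
    (hX : ∀ k, Measurable (X k)) (hmap : ∀ k, Measure.map (X k) P = μ)
    (hmix : ∀ f g : EuclideanSpace ℝ (Fin d) → ℝ, MemLp f 2 μ → MemLp g 2 μ →
          ∀ i j : ℕ,
            (∫ ω, f (X i ω) * g (X j ω) ∂P) - (∫ y, f y ∂μ) * (∫ y, g y ∂μ) ≤
              ρ (Nat.dist i j) *
                Real.sqrt (((∫ y, f y ^ 2 ∂μ) - (∫ y, f y ∂μ) ^ 2) *
                  ((∫ y, g y ^ 2 ∂μ) - (∫ y, g y ∂μ) ^ 2)))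
    (hA : MeasurableSet A) {N : ℕ} (hN : 1 ≤ N) :
    ∫ ω, (((empMeas d N fun k => X k ω) A).toReal - (μ A).toReal) ^ 2 ∂P ≤
      (μ A).toReal * (1 - (μ A).toReal) * ((N : ℝ) ^ 2)⁻¹ *
        ∑ i ∈ Finset.range N, ∑ j ∈ Finset.range N, ρ (Nat.dist i j) := by
  have hN0 : (N : ℝ) ≠ 0 := Nat.cast_ne_zero.mpr (by omega)
  have hm0 : 0 ≤ (μ A).toReal := ENNReal.toReal_nonneg
  have hm1 : (μ A).toReal ≤ 1 := by
    have h := ENNReal.toReal_mono one_ne_top (prob_le_one (μ := μ) (s := A))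
    simpa using h
  have hintf : ∫ y, A.indicator (fun _ => (1:ℝ)) y ∂μ = (μ A).toReal := by
    exact integral_indicator_one (μ := μ) hA
  have hintf2 : ∫ y, (A.indicator (fun _ => (1:ℝ)) y) ^ 2 ∂μ = (μ A).toReal := by
    have : ∀ y, (A.indicator (fun _ => (1:ℝ)) y) ^ 2 = A.indicator (fun _ => (1:ℝ)) y := by
      intro y; by_cases h : y ∈ A <;> simp [Set.indicator_apply, h]
    simp_rw [this]; exact hintf
  have hfL2 : MemLp (A.indicator (fun _ => (1:ℝ))) 2 μ :=
    memLp_indicator_const 2 hA (1:ℝ) (Or.inr (measure_ne_top μ A))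
  have expand : ∀ ω, (((empMeas d N fun k => X k ω) A).toReal - (μ A).toReal) ^ 2
      = ((N:ℝ)⁻¹)^2 * ∑ i ∈ Finset.range N, ∑ j ∈ Finset.range N,
          A.indicator (fun _ => (1:ℝ)) (X i ω) * A.indicator (fun _ => (1:ℝ)) (X j ω)
        - 2 * (μ A).toReal *
            ((N:ℝ)⁻¹ * ∑ k ∈ Finset.range N, A.indicator (fun _ => (1:ℝ)) (X k ω))
        + (μ A).toReal ^ 2 := by
    intro ω
    rw [empMeas_toReal _ hA, ← Finset.sum_mul_sum]
    ring
  simp_rw [expand]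
  have hint1 : Integrable (fun ω => ((N:ℝ)⁻¹)^2 *
      ∑ i ∈ Finset.range N, ∑ j ∈ Finset.range N,
        A.indicator (fun _ => (1:ℝ)) (X i ω) * A.indicator (fun _ => (1:ℝ)) (X j ω)) P :=
    (integrable_finset_sum _ (fun i _ =>
      integrable_finset_sum _ (fun j _ => integrable_fXX hX hA i j))).const_mul _
  have hint2 : Integrable (fun ω => 2 * (μ A).toReal *
      ((N:ℝ)⁻¹ * ∑ k ∈ Finset.range N, A.indicator (fun _ => (1:ℝ)) (X k ω))) P :=
    ((integrable_finset_sum _ (fun i _ => integrable_fX hX hA i)).const_mul _).const_mul _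
  have hint12 : Integrable (fun ω => ((N:ℝ)⁻¹)^2 *
      (∑ i ∈ Finset.range N, ∑ j ∈ Finset.range N,
        A.indicator (fun _ => (1:ℝ)) (X i ω) * A.indicator (fun _ => (1:ℝ)) (X j ω))
      - 2 * (μ A).toReal *
          ((N:ℝ)⁻¹ * ∑ k ∈ Finset.range N, A.indicator (fun _ => (1:ℝ)) (X k ω))) P :=
    hint1.sub hint2
  rw [integral_add hint12 (integrable_const _), integral_sub hint1 hint2,
    integral_const_mul, integral_const_mul, integral_const_mul,
    integral_finset_sum _ (fun i _ =>
      integrable_finset_sum _ (fun j _ => integrable_fXX hX hA i j))]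
  simp_rw [integral_finset_sum _ (fun j _ => integrable_fXX hX hA _ j)]
  rw [integral_finset_sum _ (fun i _ => integrable_fX hX hA i)]
  simp_rw [int_fX hX hmap hA]
  rw [Finset.sum_const, Finset.card_range, nsmul_eq_mul, integral_const]
  simp only [Measure.real, measure_univ, ENNReal.toReal_one, smul_eq_mul, one_mul]
  have key : ∀ i j : ℕ, (∫ ω, A.indicator (fun _ => (1:ℝ)) (X i ω)
        * A.indicator (fun _ => (1:ℝ)) (X j ω) ∂P) - (μ A).toReal ^ 2
      ≤ ρ (Nat.dist i j) * ((μ A).toReal * (1 - (μ A).toReal)) := by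
    intro i j
    have h := hmix _ _ hfL2 hfL2 i j
    rw [hintf, hintf2] at h
    have hs : Real.sqrt (((μ A).toReal - (μ A).toReal ^ 2) * ((μ A).toReal - (μ A).toReal ^ 2))
        = (μ A).toReal * (1 - (μ A).toReal) := by
      rw [Real.sqrt_mul_self (by nlinarith)]; ring
    rw [hs] at h
    nlinarith [h]
  have hsum : ∑ i ∈ Finset.range N, ∑ j ∈ Finset.range N,
        ((∫ ω, A.indicator (fun _ => (1:ℝ)) (X i ω)
          * A.indicator (fun _ => (1:ℝ)) (X j ω) ∂P) - (μ A).toReal ^ 2)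
      ≤ ((μ A).toReal * (1 - (μ A).toReal)) *
          ∑ i ∈ Finset.range N, ∑ j ∈ Finset.range N, ρ (Nat.dist i j) := by
    rw [Finset.mul_sum]
    refine Finset.sum_le_sum fun i _ => ?_
    rw [Finset.mul_sum]
    refine Finset.sum_le_sum fun j _ => ?_
    calc _ ≤ ρ (Nat.dist i j) * ((μ A).toReal * (1 - (μ A).toReal)) := key i j
    _ = _ := by ring
  have hexp : ∑ i ∈ Finset.range N, ∑ j ∈ Finset.range N,
        ((∫ ω, A.indicator (fun _ => (1:ℝ)) (X i ω)
          * A.indicator (fun _ => (1:ℝ)) (X j ω) ∂P) - (μ A).toReal ^ 2)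
      = (∑ i ∈ Finset.range N, ∑ j ∈ Finset.range N,
          ∫ ω, A.indicator (fun _ => (1:ℝ)) (X i ω)
            * A.indicator (fun _ => (1:ℝ)) (X j ω) ∂P)
        - (N:ℝ)^2 * (μ A).toReal^2 := by
    simp only [Finset.sum_sub_distrib, Finset.sum_const, Finset.card_range, nsmul_eq_mul]
    ring
  rw [hexp] at hsum
  generalize hT : (∑ i ∈ Finset.range N, ∑ j ∈ Finset.range N,
      ∫ ω, A.indicator (fun _ => (1:ℝ)) (X i ω)
        * A.indicator (fun _ => (1:ℝ)) (X j ω) ∂P) = T at hsum ⊢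
  generalize hR : (∑ i ∈ Finset.range N, ∑ j ∈ Finset.range N, ρ (Nat.dist i j)) = R at hsum ⊢
  have hN2 : (0:ℝ) < (N:ℝ)^2 := by positivity
  have h3 := mul_le_mul_of_nonneg_left hsum (le_of_lt (inv_pos.mpr hN2))
  have e1 : ((N:ℝ)^2)⁻¹ * (T - (N:ℝ)^2 * (μ A).toReal^2)
      = ((N:ℝ)^2)⁻¹ * T - (μ A).toReal^2 := by field_simp
  have e2 : ((N:ℝ)^2)⁻¹ * ((μ A).toReal * (1 - (μ A).toReal) * R)
      = (μ A).toReal * (1 - (μ A).toReal) * ((N:ℝ)^2)⁻¹ * R := by ring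
  rw [e1, e2] at h3
  have e3 : ((N:ℝ)⁻¹)^2 * T - 2 * (μ A).toReal * ((N:ℝ)⁻¹ * ((N:ℝ) * (μ A).toReal))
        + (μ A).toReal ^ 2 = ((N:ℝ)^2)⁻¹ * T - (μ A).toReal^2 := by
    field_simp; ring
  rw [e3]
  exact h3


-- Cauchy-Schwarz for L1 vs L2 on probability space
lemma cs_l1 {Ω : Type} [MeasurableSpace Ω] {P : Measure Ω} [IsProbabilityMeasure P]
    {g : Ω → ℝ} (hg : Integrable g P) (hg2 : Integrable (fun ω => g ω ^ 2) P) :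
    (∫ ω, |g ω| ∂P) ^ 2 ≤ ∫ ω, g ω ^ 2 ∂P := by
  set a := ∫ ω, |g ω| ∂P with ha
  have h0 : 0 ≤ ∫ ω, (|g ω| - a) ^ 2 ∂P := integral_nonneg fun ω => sq_nonneg _
  have hexp : ∀ ω, (|g ω| - a) ^ 2 = g ω ^ 2 - 2 * a * |g ω| + a ^ 2 := by
    intro ω; rw [sub_sq, sq_abs]; ring
  have heq : ∫ ω, (|g ω| - a) ^ 2 ∂P = (∫ ω, g ω ^ 2 ∂P) - a ^ 2 := by
    simp_rw [hexp]
    have h12 : Integrable (fun ω => g ω ^ 2 - 2 * a * |g ω|) P :=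
      hg2.sub (hg.abs.const_mul _)
    rw [integral_add h12 (integrable_const _),
      integral_sub hg2 (hg.abs.const_mul _), integral_const_mul, integral_const]
    simp only [Measure.real, measure_univ, ENNReal.toReal_one, smul_eq_mul, one_mul]
    rw [← ha]; ring
  linarith [heq ▸ h0]

-- sum of mixing coefficients bound
lemma sum_dist_le {ρ : ℕ → ℝ} (hρ : ∀ n, 0 ≤ ρ n) (hsum : Summable ρ) (N : ℕ) :
    ∑ i ∈ Finset.range N, ∑ j ∈ Finset.range N, ρ (Nat.dist i j)
      ≤ 2 * N * ∑' k, ρ k := by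
  have hT : ∀ s : Finset ℕ, ∑ k ∈ s, ρ k ≤ ∑' k, ρ k :=
    fun s => Summable.sum_le_tsum s (fun k _ => hρ k) hsum
  have inner : ∀ i, ∑ j ∈ Finset.range N, ρ (Nat.dist i j) ≤ 2 * ∑' k, ρ k := by
    intro i
    rw [← Finset.sum_filter_add_sum_filter_not (Finset.range N) (fun j => j ≤ i)]
    have hinj1 : ∀ x ∈ (Finset.range N).filter (fun j => j ≤ i),
        ∀ y ∈ (Finset.range N).filter (fun j => j ≤ i),
          Nat.dist i x = Nat.dist i y → x = y := by
      intro x hx y hy h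
      simp only [Finset.mem_filter, Finset.mem_range] at hx hy
      simp only [Nat.dist] at h; omega
    have hinj2 : ∀ x ∈ (Finset.range N).filter (fun j => ¬ j ≤ i),
        ∀ y ∈ (Finset.range N).filter (fun j => ¬ j ≤ i),
          Nat.dist i x = Nat.dist i y → x = y := by
      intro x hx y hy h
      simp only [Finset.mem_filter, Finset.mem_range] at hx hy
      simp only [Nat.dist] at h; omega
    have e1 := Finset.sum_image (f := ρ) (g := Nat.dist i) (s := (Finset.range N).filter (fun j => j ≤ i)) hinj1
    have e2 := Finset.sum_image (f := ρ) (g := Nat.dist i) (s := (Finset.range N).filter (fun j => ¬ j ≤ i)) hinj2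
    calc ∑ j ∈ (Finset.range N).filter (fun j => j ≤ i), ρ (Nat.dist i j)
          + ∑ j ∈ (Finset.range N).filter (fun j => ¬ j ≤ i), ρ (Nat.dist i j)
        = (∑ k ∈ ((Finset.range N).filter (fun j => j ≤ i)).image (Nat.dist i), ρ k)
          + ∑ k ∈ ((Finset.range N).filter (fun j => ¬ j ≤ i)).image (Nat.dist i), ρ k := by
          rw [e1, e2]
      _ ≤ (∑' k, ρ k) + ∑' k, ρ k := add_le_add (hT _) (hT _)
      _ = 2 * ∑' k, ρ k := by ring
  calc ∑ i ∈ Finset.range N, ∑ j ∈ Finset.range N, ρ (Nat.dist i j)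
      ≤ ∑ i ∈ Finset.range N, 2 * ∑' k, ρ k := Finset.sum_le_sum fun i _ => inner i
    _ = 2 * N * ∑' k, ρ k := by rw [Finset.sum_const, Finset.card_range, nsmul_eq_mul]; ring


/-- Key estimate in the proof of Theorem 15 of Fournier-Guillin: variance bound for
`μ_N(A)` for a stationary `ρ`-mixing sequence, and the resulting `L¹` bound when the
mixing coefficients are summable. -/
theorem rho_mixing_empirical_variance_bound
    (d : ℕ) (hd : 1 ≤ d)
    (ρ : ℕ → ℝ) (hρpos : ∀ n, 0 ≤ ρ n) (hρlim : Filter.Tendsto ρ Filter.atTop (nhds 0)) :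
    (∀ (Ω : Type) (_ : MeasurableSpace Ω) (P : Measure Ω), IsProbabilityMeasure P →
      ∀ (X : ℕ → Ω → EuclideanSpace ℝ (Fin d)) (μ : Measure (EuclideanSpace ℝ (Fin d))),
        (∀ k, Measurable (X k)) →
        IsProbabilityMeasure μ →
        (∀ k, Measure.map (X k) P = μ) →
        (∀ (m k : ℕ), Measure.map (fun ω (i : Fin m) => X (i + k) ω) P =
          Measure.map (fun ω (i : Fin m) => X i ω) P) →
        (∀ f g : EuclideanSpace ℝ (Fin d) → ℝ, MemLp f 2 μ → MemLp g 2 μ →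
          ∀ i j : ℕ,
            (∫ ω, f (X i ω) * g (X j ω) ∂P) - (∫ y, f y ∂μ) * (∫ y, g y ∂μ) ≤
              ρ (Nat.dist i j) *
                Real.sqrt (((∫ y, f y ^ 2 ∂μ) - (∫ y, f y ∂μ) ^ 2) *
                  ((∫ y, g y ^ 2 ∂μ) - (∫ y, g y ∂μ) ^ 2))) →
      ∀ A : Set (EuclideanSpace ℝ (Fin d)), MeasurableSet A → ∀ N : ℕ, 1 ≤ N →
        ∫ ω, (((empMeas d N fun k => X k ω) A).toReal -
            ∫ ω', ((empMeas d N fun k => X k ω') A).toReal ∂P) ^ 2 ∂P ≤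
          (μ A).toReal * (1 - (μ A).toReal) * ((N : ℝ) ^ 2)⁻¹ *
            ∑ i ∈ Finset.range N, ∑ j ∈ Finset.range N, ρ (Nat.dist i j)) ∧
    (Summable ρ →
      ∃ C : ℝ, 0 < C ∧
      ∀ (Ω : Type) (_ : MeasurableSpace Ω) (P : Measure Ω), IsProbabilityMeasure P →
      ∀ (X : ℕ → Ω → EuclideanSpace ℝ (Fin d)) (μ : Measure (EuclideanSpace ℝ (Fin d))),
        (∀ k, Measurable (X k)) →
        IsProbabilityMeasure μ →
        (∀ k, Measure.map (X k) P = μ) →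
        (∀ (m k : ℕ), Measure.map (fun ω (i : Fin m) => X (i + k) ω) P =
          Measure.map (fun ω (i : Fin m) => X i ω) P) →
        (∀ f g : EuclideanSpace ℝ (Fin d) → ℝ, MemLp f 2 μ → MemLp g 2 μ →
          ∀ i j : ℕ,
            (∫ ω, f (X i ω) * g (X j ω) ∂P) - (∫ y, f y ∂μ) * (∫ y, g y ∂μ) ≤
              ρ (Nat.dist i j) *
                Real.sqrt (((∫ y, f y ^ 2 ∂μ) - (∫ y, f y ∂μ) ^ 2) *
                  ((∫ y, g y ^ 2 ∂μ) - (∫ y, g y ∂μ) ^ 2))) →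
      ∀ A : Set (EuclideanSpace ℝ (Fin d)), MeasurableSet A → ∀ N : ℕ, 1 ≤ N →
        ∫ ω, |((empMeas d N fun k => X k ω) A).toReal - (μ A).toReal| ∂P ≤
          min (2 * (μ A).toReal) (C * Real.sqrt ((μ A).toReal / N))) := by
  constructor
  · intro Ω _ P hP X μ hX hμ hmap _hstat hmix A hA N hN
    haveI := hP; haveI := hμ
    rw [mean_S hX hmap hA hN]
    exact var_S ρ hX hmap hmix hA hN
  · intro hsum
    have hT0 : 0 ≤ ∑' k, ρ k := tsum_nonneg hρpos
    refine ⟨Real.sqrt (2 * (∑' k, ρ k) + 1), Real.sqrt_pos.mpr (by linarith), ?_⟩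
    intro Ω _ P hP X μ hX hμ hmap _hstat hmix A hA N hN
    haveI := hP; haveI := hμ
    have hN0 : (N : ℝ) ≠ 0 := Nat.cast_ne_zero.mpr (by omega)
    have hNpos : (0:ℝ) < N := by positivity
    have hm0 : 0 ≤ (μ A).toReal := ENNReal.toReal_nonneg
    have hm1 : (μ A).toReal ≤ 1 := by
      have h := ENNReal.toReal_mono one_ne_top (prob_le_one (μ := μ) (s := A))
      simpa using h
    set m := (μ A).toReal with hm
    set T := ∑' k, ρ k with hTdef
    -- integrability of the empirical mass
    have hIS : Integrable (fun ω => ((empMeas d N fun k => X k ω) A).toReal) P := by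
      simp_rw [empMeas_toReal _ hA]
      exact (integrable_finset_sum _ fun i _ => integrable_fX hX hA i).const_mul _
    have hIS2 : Integrable (fun ω => ((empMeas d N fun k => X k ω) A).toReal ^ 2) P := by
      have e : ∀ ω, ((empMeas d N fun k => X k ω) A).toReal ^ 2
          = ((N:ℝ)⁻¹)^2 * ∑ i ∈ Finset.range N, ∑ j ∈ Finset.range N,
              A.indicator (fun _ => (1:ℝ)) (X i ω) * A.indicator (fun _ => (1:ℝ)) (X j ω) := by
        intro ω
        rw [empMeas_toReal _ hA, ← Finset.sum_mul_sum]
        ring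
      simp_rw [e]
      exact (integrable_finset_sum _ (fun i _ =>
        integrable_finset_sum _ (fun j _ => integrable_fXX hX hA i j))).const_mul _
    have hg : Integrable (fun ω => ((empMeas d N fun k => X k ω) A).toReal - m) P :=
      hIS.sub (integrable_const m)
    have hg2 : Integrable (fun ω => (((empMeas d N fun k => X k ω) A).toReal - m) ^ 2) P := by
      have e : ∀ ω, (((empMeas d N fun k => X k ω) A).toReal - m) ^ 2
          = ((empMeas d N fun k => X k ω) A).toReal ^ 2
            - 2 * m * ((empMeas d N fun k => X k ω) A).toReal + m ^ 2 := by
        intro ω; ring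
      simp_rw [e]
      exact (hIS2.sub (hIS.const_mul _)).add (integrable_const _)
    have habs : Integrable (fun ω => |((empMeas d N fun k => X k ω) A).toReal - m|) P := hg.abs
    -- bound 1 : ≤ 2 m
    have bound1 : ∫ ω, |((empMeas d N fun k => X k ω) A).toReal - m| ∂P ≤ 2 * m := by
      have hpt : ∀ ω, |((empMeas d N fun k => X k ω) A).toReal - m|
          ≤ ((empMeas d N fun k => X k ω) A).toReal + m := by
        intro ω
        have h1 : (0:ℝ) ≤ ((empMeas d N fun k => X k ω) A).toReal := ENNReal.toReal_nonneg
        rw [abs_le]; constructor <;> [linarith; linarith]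
      calc ∫ ω, |((empMeas d N fun k => X k ω) A).toReal - m| ∂P
          ≤ ∫ ω, ((empMeas d N fun k => X k ω) A).toReal + m ∂P :=
            integral_mono habs (hIS.add (integrable_const m)) hpt
        _ = 2 * m := by
            rw [integral_add hIS (integrable_const m), mean_S hX hmap hA hN, integral_const]
            simp only [Measure.real, measure_univ, ENNReal.toReal_one, smul_eq_mul, one_mul]
            ring
    -- bound 2 : Cauchy-Schwarz + variance bound
    have hvar := var_S ρ hX hmap hmix hA hN
    have hSig := sum_dist_le hρpos hsum N
    have hchain : m * (1 - m) * ((N:ℝ)^2)⁻¹ *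
        (∑ i ∈ Finset.range N, ∑ j ∈ Finset.range N, ρ (Nat.dist i j))
        ≤ (2 * T + 1) * (m / N) := by
      have h1 : m * (1 - m) * ((N:ℝ)^2)⁻¹ *
            (∑ i ∈ Finset.range N, ∑ j ∈ Finset.range N, ρ (Nat.dist i j))
          ≤ m * (1 - m) * ((N:ℝ)^2)⁻¹ * (2 * N * T) := by
        refine mul_le_mul_of_nonneg_left hSig ?_
        have : 0 ≤ m * (1 - m) := mul_nonneg hm0 (by linarith)
        positivity
      have e : m * (1 - m) * ((N:ℝ)^2)⁻¹ * (2 * N * T) = (m * (1 - m) * (2 * T)) * (N:ℝ)⁻¹ := by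
        field_simp
      have key : m * (1 - m) * (2 * T) ≤ (2 * T + 1) * m := by
        nlinarith [mul_nonneg hT0 (mul_nonneg hm0 hm0), hm0]
      have h2 : (m * (1 - m) * (2 * T)) * (N:ℝ)⁻¹ ≤ ((2 * T + 1) * m) * (N:ℝ)⁻¹ :=
        mul_le_mul_of_nonneg_right key (by positivity)
      have e2 : ((2 * T + 1) * m) * (N:ℝ)⁻¹ = (2 * T + 1) * (m / N) := by
        rw [div_eq_mul_inv]; ring
      linarith [e ▸ h1, e2 ▸ h2]
    have hcs := cs_l1 hg hg2
    have ha0 : 0 ≤ ∫ ω, |((empMeas d N fun k => X k ω) A).toReal - m| ∂P :=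
      integral_nonneg fun ω => abs_nonneg _
    have hsq : (∫ ω, |((empMeas d N fun k => X k ω) A).toReal - m| ∂P) ^ 2
        ≤ (2 * T + 1) * (m / N) := le_trans hcs (le_trans hvar hchain)
    have bound2 : ∫ ω, |((empMeas d N fun k => X k ω) A).toReal - m| ∂P
        ≤ Real.sqrt (2 * T + 1) * Real.sqrt (m / N) := by
      have h1 : ∫ ω, |((empMeas d N fun k => X k ω) A).toReal - m| ∂P
          = Real.sqrt ((∫ ω, |((empMeas d N fun k => X k ω) A).toReal - m| ∂P) ^ 2) :=
        (Real.sqrt_sq ha0).symm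
      rw [h1, ← Real.sqrt_mul (by linarith) (m / N)]
      exact Real.sqrt_le_sqrt hsq
    exact le_min bound1 bound2

end
end
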